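/- With E, A, α₁, α₂ as above and B the computad with 2-cells {b₁,b₂,b₃} and one 3-cell g : b₁·b₂ → b₃, the coequalizer P of α₁ × id_B, α₂ × id_B : E × B → A × B has exactly two 3-cells, both with source (ā,b₁)·(ā,b₂) and target (a₃,b₃). -/

import Mathlib

open CategoryTheory

/-- A 2-degenerate 3-computad: a single 0-cell, no 1-cells, so the data is a set of
2-cells, a set of 3-cells, and boundary maps into the free commutative monoid
(multisets) on the 2-cells. -/
structure DegComputad where
  C2 : Type
  C3 : Type
  src : C3 → Multiset C2
  tgt : C3 → Multiset C2

/-- Morphisms of 2-degenerate 3-computads. -/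
@[ext]
structure DegComputad.Hom (A B : DegComputad) where
  f2 : A.C2 → B.C2
  f3 : A.C3 → B.C3
  src_comm : ∀ e, B.src (f3 e) = Multiset.map f2 (A.src e)
  tgt_comm : ∀ e, B.tgt (f3 e) = Multiset.map f2 (A.tgt e)

instance : Category DegComputad where
  Hom := DegComputad.Hom
  id A := ⟨id, id, by simp, by simp⟩
  comp f g := ⟨g.f2 ∘ f.f2, g.f3 ∘ f.f3,
    by intro e; simp [f.src_comm, g.src_comm, Multiset.map_map],
    by intro e; simp [f.tgt_comm, g.tgt_comm, Multiset.map_map]⟩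

@[simp] lemma DegComputad.id_f2 (A : DegComputad) : (𝟙 A : A ⟶ A).f2 = id := rfl
@[simp] lemma DegComputad.id_f3 (A : DegComputad) : (𝟙 A : A ⟶ A).f3 = id := rfl
@[simp] lemma DegComputad.comp_f2 {A B C : DegComputad} (f : A ⟶ B) (g : B ⟶ C) :
    (f ≫ g).f2 = g.f2 ∘ f.f2 := rfl
@[simp] lemma DegComputad.comp_f3 {A B C : DegComputad} (f : A ⟶ B) (g : B ⟶ C) :
    (f ≫ g).f3 = g.f3 ∘ f.f3 := rfl
/-- The computad `A`: 2-cells `a₁,a₂,a₃` (as `0,1,2`), one 3-cell `f : a₁·a₂ → a₃`. -/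
abbrev CompA : DegComputad := ⟨Fin 3, Unit, fun _ => {0, 1}, fun _ => {2}⟩

/-- The computad `B`: an isomorphic copy of `A`, with 2-cells `b₁,b₂,b₃` and
one 3-cell `g : b₁·b₂ → b₃`. -/
abbrev CompB : DegComputad := ⟨Fin 3, Unit, fun _ => {0, 1}, fun _ => {2}⟩

/-- The putative product `A × B`: nine 2-cells `(aᵢ,bⱼ)` and two 3-cells
`(f,g)₁ : (a₁,b₁)·(a₂,b₂) → (a₃,b₃)` and `(f,g)₂ : (a₂,b₁)·(a₁,b₂) → (a₃,b₃)`. -/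
abbrev CompAB : DegComputad :=
  ⟨Fin 3 × Fin 3, Fin 2,
   fun e => if e = 0 then {((0 : Fin 3), (0 : Fin 3)), (1, 1)} else {(1, 0), (0, 1)},
   fun _ => {(2, 2)}⟩

/-- First projection `A × B ⟶ A`. -/
def projA : CompAB ⟶ CompA :=
  ⟨Prod.fst, fun _ => (), by decide, by decide⟩

/-- Second projection `A × B ⟶ B`. -/
def projB : CompAB ⟶ CompB :=
  ⟨Prod.snd, fun _ => (), by decide, by decide⟩

/-- The computad `E`: two 2-cells `x,y` (as `0,1`) and no 3-cells. -/
abbrev CompE : DegComputad := ⟨Fin 2, Empty, fun e => e.elim, fun e => e.elim⟩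

/-- The morphism `α₁ : E ⟶ A`, `x ↦ a₁`, `y ↦ a₃`. -/
def alpha1 : CompE ⟶ CompA := ⟨![0, 2], fun e => e.elim, fun e => e.elim, fun e => e.elim⟩

/-- The morphism `α₂ : E ⟶ A`, `x ↦ a₂`, `y ↦ a₃`. -/
def alpha2 : CompE ⟶ CompA := ⟨![1, 2], fun e => e.elim, fun e => e.elim, fun e => e.elim⟩

/-- The coequalizer `C` of `α₁, α₂`: two 2-cells `ā, a₃` (as `0,1`) and one 3-cell
`f̄ : ā·ā → a₃`. -/
abbrev CompC : DegComputad := ⟨Fin 2, Unit, fun _ => {0, 0}, fun _ => {1}⟩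

/-- The quotient morphism `A ⟶ C`, identifying `a₁` and `a₂`. -/
def qmap : CompA ⟶ CompC := ⟨![0, 0, 1], fun _ => (), by decide, by decide⟩

/-- The product `E × B`: 2-cells `(x,bⱼ)`, `(y,bⱼ)`, and no 3-cells. -/
abbrev CompEB : DegComputad := ⟨Fin 2 × Fin 3, Empty, fun e => e.elim, fun e => e.elim⟩

/-- The morphism `α₁ × id_B : E × B ⟶ A × B`. -/
def alpha1B : CompEB ⟶ CompAB :=
  ⟨Prod.map ![0, 2] id, fun e => e.elim, fun e => e.elim, fun e => e.elim⟩

/-- The morphism `α₂ × id_B : E × B ⟶ A × B`. -/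
def alpha2B : CompEB ⟶ CompAB :=
  ⟨Prod.map ![1, 2] id, fun e => e.elim, fun e => e.elim, fun e => e.elim⟩

open CategoryTheory.Limits

/-- Explicit coequalizer of `alpha1B, alpha2B`. -/
abbrev CompP : DegComputad :=
  ⟨Fin 2 × Fin 3, Fin 2, fun _ => {(0, 0), (0, 1)}, fun _ => {(1, 2)}⟩

def pmap : CompAB ⟶ CompP :=
  ⟨Prod.map ![0, 0, 1] id, id, by decide, by decide⟩

lemma pmap_w : alpha1B ≫ pmap = alpha2B ≫ pmap := by
  refine DegComputad.Hom.ext ?_ (funext fun e => e.elim)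
  decide

lemma cofork_f2 (t : Cofork alpha1B alpha2B) (j : Fin 3) :
    t.π.f2 (0, j) = t.π.f2 (1, j) := by
  have := congrArg DegComputad.Hom.f2 t.condition
  exact congrFun this ((0 : Fin 2), j)

/-- `pmap` is a colimit cofork. -/
noncomputable def pmapIsColimit : IsColimit (Cofork.ofπ pmap pmap_w) := by
  refine Cofork.IsColimit.mk _
    (fun t => ⟨fun p => t.π.f2 (![0, 2] p.1, p.2), t.π.f3, ?_, ?_⟩) ?_ ?_
  · intro e
    refine (t.π.src_comm e).trans ?_
    have key : ∀ e' : Fin 2, Multiset.map t.π.f2 (CompAB.src e') =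
        Multiset.map (fun p : Fin 2 × Fin 3 => t.π.f2 (![0, 2] p.1, p.2)) (CompP.src e') := by
      have h0 := cofork_f2 t 0
      have h1 := cofork_f2 t 1
      intro e'
      fin_cases e' <;> simp_all [CompAB, CompP]
    exact key e
  · intro e
    refine (t.π.tgt_comm e).trans ?_
    have key : ∀ e' : Fin 2, Multiset.map t.π.f2 (CompAB.tgt e') =
        Multiset.map (fun p : Fin 2 × Fin 3 => t.π.f2 (![0, 2] p.1, p.2)) (CompP.tgt e') := by
      intro e'
      fin_cases e' <;> simp [CompAB, CompP]
    exact key e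
  · intro t
    refine DegComputad.Hom.ext (funext fun p => ?_) rfl
    obtain ⟨i, j⟩ := p
    have h := cofork_f2 t j
    change t.π.f2 (![0, 2] (pmap.f2 (i, j)).1, (pmap.f2 (i, j)).2) = t.π.f2 (i, j)
    fin_cases i <;> simp_all [pmap, Matrix.cons_val_zero, Matrix.cons_val_one]
  · intro t m hm
    have hf2 := congrArg DegComputad.Hom.f2 hm
    have hf3 := congrArg DegComputad.Hom.f3 hm
    refine DegComputad.Hom.ext (funext fun p => ?_) hf3
    obtain ⟨i, j⟩ := p
    fin_cases i
    · exact congrFun hf2 ((0 : Fin 3), j)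
    · exact congrFun hf2 ((2 : Fin 3), j)

/-- The coequalizer `P` of `α₁ × id_B, α₂ × id_B : E × B ⟶ A × B` has exactly two
3-cells (the images of the two 3-cells of `A × B`), both with source
`(ā,b₁)·(ā,b₂)` and target `(a₃,b₃)`; here `(ā,bⱼ)` denotes the common image of
`(a₁,bⱼ)` and `(a₂,bⱼ)`. -/
theorem stmt7 (Q : DegComputad) (π : CompAB ⟶ Q)
    (w : alpha1B ≫ π = alpha2B ≫ π) (h : Nonempty (IsColimit (Cofork.ofπ π w))) :
    Function.Bijective π.f3 ∧
    (∀ j : Fin 3, π.f2 (0, j) = π.f2 (1, j)) ∧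
    (∀ e : Fin 2, Q.src (π.f3 e) = {π.f2 (0, 0), π.f2 (0, 1)}) ∧
    (∀ e : Fin 2, Q.tgt (π.f3 e) = {π.f2 (2, 2)}) := by
  obtain ⟨hc⟩ := h
  have hw : ∀ j : Fin 3, π.f2 (0, j) = π.f2 (1, j) := by
    intro j
    exact congrFun (congrArg DegComputad.Hom.f2 w) ((0 : Fin 2), j)
  refine ⟨?_, hw, ?_, ?_⟩
  · -- bijectivity via uniqueness of coequalizers
    let i := IsColimit.coconePointUniqueUpToIso pmapIsColimit hc
    have hfac : pmap ≫ i.hom = π :=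
      IsColimit.comp_coconePointUniqueUpToIso_hom pmapIsColimit hc
        WalkingParallelPair.one
    have hπ : π.f3 = i.hom.f3 := by
      have := congrArg DegComputad.Hom.f3 hfac
      simpa [pmap] using this.symm
    rw [hπ]
    have h1 : i.hom.f3 ∘ i.inv.f3 = id := by
      have := congrArg DegComputad.Hom.f3 i.inv_hom_id
      rwa [DegComputad.comp_f3, DegComputad.id_f3] at this
    have h2 : i.inv.f3 ∘ i.hom.f3 = id := by
      have := congrArg DegComputad.Hom.f3 i.hom_inv_id
      rwa [DegComputad.comp_f3, DegComputad.id_f3] at this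
    exact ⟨Function.LeftInverse.injective (congrFun h2),
      Function.RightInverse.surjective (congrFun h1)⟩
  · intro e
    refine (π.src_comm e).trans ?_
    have h0 : π.f2 0 = π.f2 (1, 0) := hw 0
    have h1 := hw 1
    fin_cases e <;> simp_all [CompAB]
  · intro e
    refine (π.tgt_comm e).trans ?_
    fin_cases e <;> simp [CompAB]
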